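/- If U and V are independent and uniformly distributed on [0,1], then T = -U² ln(V)/α has probability density g(t) = α√π Φ(-√(2αt))/√(αt) on (0,∞). -/

import Mathlib

open MeasureTheory Set Real ProbabilityTheory

/-- The standard normal distribution function Φ. -/
noncomputable def Phi (z : ℝ) : ℝ :=
  (Real.sqrt (2 * Real.pi))⁻¹ * ∫ y in Set.Iic z, Real.exp (-y ^ 2 / 2)

/-- The modified exponential density, extended by 0 off (0,∞). -/
noncomputable def modExpPdf (α t : ℝ) : ℝ :=
  if 0 < t then α * Real.sqrt Real.pi * Phi (-Real.sqrt (2 * α * t)) / Real.sqrt (α * t)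
  else 0


-- exponential CDF integral
lemma exp_cdf_integral {k t : ℝ} (hk : 0 < k) (ht : 0 < t) :
    ∫ s in Ioc (0:ℝ) t, k * Real.exp (-(k*s)) = 1 - Real.exp (-(k*t)) := by
  rw [← intervalIntegral.integral_of_le ht.le]
  have hderiv : ∀ s ∈ uIcc (0:ℝ) t, HasDerivAt (fun x => -Real.exp (-(k*x)))
      (k * Real.exp (-(k*s))) s := by
    intro s _
    have h := (((hasDerivAt_id s).const_mul k).neg).exp.neg
    exact h.congr_deriv (by simp [mul_comm])
  have hint : IntervalIntegrable (fun s => k * Real.exp (-(k*s))) volume 0 t :=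
    (by continuity : Continuous fun s => k * Real.exp (-(k*s))).intervalIntegrable 0 t
  rw [intervalIntegral.integral_eq_sub_of_hasDerivAt hderiv hint]
  simp
  ring

-- image lemma
lemma image_div_Ioo {c : ℝ} (hc : 0 < c) : (fun u : ℝ => c/u) '' Ioo 0 1 = Ioi c := by
  ext y
  simp only [mem_image, mem_Ioo, mem_Ioi]
  constructor
  · rintro ⟨u, ⟨hu0, hu1⟩, rfl⟩
    rw [lt_div_iff₀ hu0]
    nlinarith
  · intro hy
    have hy0 : 0 < y := hc.trans hy
    exact ⟨c/y, ⟨div_pos hc hy0, (div_lt_one hy0).mpr hy⟩, by field_simp⟩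

lemma hasDeriv_div {c : ℝ} (u : ℝ) (hu : u ≠ 0) :
    HasDerivAt (fun x : ℝ => c/x) (-(c/u^2)) u := by
  have h := (hasDerivAt_inv hu).const_mul c
  simpa [div_eq_mul_inv, mul_comm, neg_div] using h

lemma injOn_div {c : ℝ} (hc : 0 < c) : InjOn (fun u : ℝ => c/u) (Ioo 0 1) := by
  intro a ha b hb h
  simp only at h
  field_simp [ha.1.ne', hb.1.ne'] at h
  exact h.symm

lemma cov_integral {c : ℝ} (hc : 0 < c) (g : ℝ → ℝ) :
    ∫ y in Ioi c, g y = ∫ u in Ioo (0:ℝ) 1, (c/u^2) * g (c/u) := by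
  rw [← image_div_Ioo hc,
    integral_image_eq_integral_abs_deriv_smul measurableSet_Ioo
      (fun u hu => (hasDeriv_div u hu.1.ne').hasDerivWithinAt) (injOn_div hc) g]
  refine setIntegral_congr_fun measurableSet_Ioo fun u hu => ?_
  rw [abs_neg, abs_of_pos (div_pos hc (pow_pos hu.1 2))]
  simp [smul_eq_mul]

lemma cov_integrable {c : ℝ} (hc : 0 < c) {g : ℝ → ℝ} (hg : IntegrableOn g (Ioi c)) :
    IntegrableOn (fun u => (c/u^2) * g (c/u)) (Ioo (0:ℝ) 1) := by
  rw [← image_div_Ioo hc] at hg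
  have := (integrableOn_image_iff_integrableOn_abs_deriv_smul measurableSet_Ioo
      (fun u hu => (hasDeriv_div (c := c) u hu.1.ne').hasDerivWithinAt) (injOn_div hc) g).mp hg
  refine this.congr_fun (fun u hu => ?_) measurableSet_Ioo
  beta_reduce
  rw [abs_neg, abs_of_pos (div_pos hc (pow_pos hu.1 2))]
  simp [smul_eq_mul]

lemma gauss_integrableOn {c : ℝ} : IntegrableOn (fun y : ℝ => Real.exp (-y^2/2)) (Ioi c) := by
  have heq : (fun y : ℝ => Real.exp (-y^2/2)) = fun y => Real.exp (-(1/2:ℝ)*y^2) := by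
    funext y; ring_nf
  rw [heq]
  exact (integrable_exp_neg_mul_sq one_half_pos).integrableOn

lemma integral_reflect (c : ℝ) :
    ∫ y in Iic (-c), Real.exp (-y^2/2) = ∫ y in Ioi c, Real.exp (-y^2/2) := by
  have h := integral_comp_neg_Iic (-c) (fun y => Real.exp (-y^2/2))
  simpa [neg_neg, neg_sq] using h

lemma harg {α s c : ℝ} (hcsq : c^2 = 2*α*s) (u : ℝ) :
    (c/u^2) * Real.exp (-(c/u)^2/2) = (c/u^2) * Real.exp (-(α*s)/u^2) := by
  rcases eq_or_ne u 0 with rfl | hu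
  · simp
  · congr 2
    rw [div_pow, hcsq]
    ring

lemma modExpPdf_eq_integral {α s : ℝ} (hα : 0 < α) (hs : 0 < s) :
    modExpPdf α s = ∫ u in Ioo (0:ℝ) 1, α/u^2 * Real.exp (-(α*s)/u^2) := by
  have hαs : 0 < α*s := mul_pos hα hs
  set c := Real.sqrt (2*α*s) with hc_def
  have hc : 0 < c := Real.sqrt_pos.mpr (by positivity)
  have hcsq : c^2 = 2*α*s := Real.sq_sqrt (by positivity)
  have main : ∫ y in Ioi c, Real.exp (-y^2/2)
      = ∫ u in Ioo (0:ℝ) 1, (c/u^2) * Real.exp (-(α*s)/u^2) :=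
    (cov_integral hc _).trans (by
      refine setIntegral_congr_fun measurableSet_Ioo fun u _ => ?_
      exact harg hcsq u)
  have hpull : ∫ u in Ioo (0:ℝ) 1, α/u^2 * Real.exp (-(α*s)/u^2)
      = (α/c) * ∫ u in Ioo (0:ℝ) 1, (c/u^2) * Real.exp (-(α*s)/u^2) := by
    rw [← integral_const_mul]
    congr 1
    funext u
    rcases eq_or_ne u 0 with rfl | hu
    · simp
    · field_simp
  unfold modExpPdf Phi
  rw [if_pos hs]
  have hiic : ∀ z : ℝ, (∫ y in Set.Iic z, Real.exp (-y ^ 2 / 2)) = ∫ y in Iic z, Real.exp (-y^2/2) := fun z => rfl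
  rw [hiic, integral_reflect, main, hpull]
  set I := ∫ u in Ioo (0:ℝ) 1, (c/u^2) * Real.exp (-(α*s)/u^2)
  have hsp : Real.sqrt Real.pi * c = Real.sqrt (α*s) * Real.sqrt (2*Real.pi) := by
    rw [hc_def, ← Real.sqrt_mul Real.pi_pos.le, ← Real.sqrt_mul hαs.le]
    congr 1
    ring
  have h2π : (0:ℝ) < Real.sqrt (2*Real.pi) := Real.sqrt_pos.mpr (by positivity)
  have hαs' : (0:ℝ) < Real.sqrt (α*s) := Real.sqrt_pos.mpr hαs
  field_simp
  rw [hc_def, Real.sqrt_mul (by positivity : (0:ℝ) ≤ 2*α), Real.sqrt_mul (by norm_num : (0:ℝ) ≤ 2)]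
  rw [Real.sqrt_mul hα.le s, Real.sqrt_mul (by norm_num : (0:ℝ) ≤ 2) π]
  ring

lemma integrableOn_inner {α s : ℝ} (hα : 0 < α) (hs : 0 < s) :
    IntegrableOn (fun u => α/u^2 * Real.exp (-(α*s)/u^2)) (Ioo (0:ℝ) 1) := by
  have hαs : 0 < α*s := mul_pos hα hs
  set c := Real.sqrt (2*α*s) with hc_def
  have hc : 0 < c := Real.sqrt_pos.mpr (by positivity)
  have hcsq : c^2 = 2*α*s := Real.sq_sqrt (by positivity)
  have h1 : IntegrableOn (fun u => (α/c) * ((c/u^2) * Real.exp (-(c/u)^2/2))) (Ioo (0:ℝ) 1) :=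
    (cov_integrable hc (gauss_integrableOn (c := c))).const_mul (α/c)
  refine h1.congr_fun (fun u hu => ?_) measurableSet_Ioo
  beta_reduce
  rw [harg hcsq u, ← mul_assoc, div_mul_div_comm, mul_comm α c,
    mul_div_mul_left _ _ hc.ne']

lemma slice_measurable (α t u : ℝ) : MeasurableSet {v : ℝ | -u^2 * Real.log v / α ≤ t} :=
  measurableSet_le ((Real.measurable_log.const_mul (-u^2)).div_const α) measurable_const

lemma slice_pos {α t u : ℝ} (hα : 0 < α) (ht : 0 < t) (hu : u ∈ Ioc (0:ℝ) 1) :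
    (volume.restrict (Icc (0:ℝ) 1)) {v | -u^2 * Real.log v / α ≤ t}
      = ENNReal.ofReal (1 - Real.exp (-(α*t)/u^2)) := by
  obtain ⟨hu0, hu1⟩ := hu
  have hu2 : (0:ℝ) < u^2 := by positivity
  rw [Measure.restrict_apply (slice_measurable α t u)]
  have hset : {v : ℝ | -u^2 * Real.log v / α ≤ t} ∩ Icc 0 1
      = insert 0 (Icc (Real.exp (-(α*t)/u^2)) 1) := by
    ext v
    simp only [mem_inter_iff, mem_setOf_eq, mem_Icc, mem_insert_iff]
    constructor
    · rintro ⟨hcond, hv0, hv1⟩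
      rcases eq_or_lt_of_le hv0 with rfl | hv0'
      · exact Or.inl rfl
      · right
        refine ⟨?_, hv1⟩
        have h1 : -u^2 * Real.log v ≤ t * α := (div_le_iff₀ hα).mp hcond
        have hlog : -(α*t)/u^2 ≤ Real.log v := by
          rw [div_le_iff₀ hu2]
          nlinarith
        exact (Real.le_log_iff_exp_le hv0').mp hlog
    · rintro (rfl | ⟨hle, hv1⟩)
      · refine ⟨by simp [Real.log_zero, ht.le], le_refl 0, zero_le_one⟩
      · have hv0 : 0 < v := lt_of_lt_of_le (Real.exp_pos _) hle
        refine ⟨?_, hv0.le, hv1⟩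
        have hlog : -(α*t)/u^2 ≤ Real.log v := (Real.le_log_iff_exp_le hv0).mpr hle
        rw [div_le_iff₀ hα]
        rw [div_le_iff₀ hu2] at hlog
        nlinarith
  rw [hset]
  have hins : volume (insert (0:ℝ) (Icc (Real.exp (-(α*t)/u^2)) 1))
      = volume (Icc (Real.exp (-(α*t)/u^2)) 1) := by
    refine le_antisymm ?_ (measure_mono (subset_insert _ _))
    rw [Set.insert_eq]
    calc volume ({(0:ℝ)} ∪ Icc (Real.exp (-(α*t)/u^2)) 1)
        ≤ volume {(0:ℝ)} + volume (Icc (Real.exp (-(α*t)/u^2)) 1) := measure_union_le _ _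
      _ = volume (Icc (Real.exp (-(α*t)/u^2)) 1) := by simp
  rw [hins, Real.volume_Icc]

lemma slice_nonpos {α t u : ℝ} (hα : 0 < α) (ht : t ≤ 0) (hu : u ∈ Ioc (0:ℝ) 1) :
    (volume.restrict (Icc (0:ℝ) 1)) {v | -u^2 * Real.log v / α ≤ t} = 0 := by
  obtain ⟨hu0, _⟩ := hu
  have hu2 : (0:ℝ) < u^2 := by positivity
  rw [Measure.restrict_apply (slice_measurable α t u)]
  have hz : volume ({0, 1} : Set ℝ) = 0 := by
    rw [Set.insert_eq]
    exact measure_union_null (measure_singleton 0) (measure_singleton 1)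
  refine measure_mono_null (fun v hv => ?_) hz
  obtain ⟨hcond, hv0, hv1⟩ := hv
  simp only [mem_insert_iff, mem_singleton_iff]
  by_contra hne
  push_neg at hne
  obtain ⟨hne0, hne1⟩ := hne
  have hv0' : 0 < v := lt_of_le_of_ne hv0 (Ne.symm hne0)
  have hv1' : v < 1 := lt_of_le_of_ne hv1 hne1
  have hlogneg : Real.log v < 0 := Real.log_neg hv0' hv1'
  have h1 : -u^2 * Real.log v ≤ t * α := (div_le_iff₀ hα).mp hcond
  nlinarith

lemma measurable_g (α : ℝ) : Measurable fun p : ℝ × ℝ => -p.1^2 * Real.log p.2 / α :=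
  (((measurable_fst.pow_const 2).neg).mul (Real.measurable_log.comp measurable_snd)).div_const α

lemma mapped_cdf {α : ℝ} (hα : 0 < α) (t : ℝ) :
    ((volume.restrict (Icc (0:ℝ) 1)).prod (volume.restrict (Icc (0:ℝ) 1)))
      ((fun p : ℝ × ℝ => -p.1^2 * Real.log p.2 / α) ⁻¹' Iic t)
    = if 0 < t then ∫⁻ u in Ioc (0:ℝ) 1, ENNReal.ofReal (1 - Real.exp (-(α*t)/u^2)) else 0 := by
  rw [Measure.prod_apply (measurable_g α measurableSet_Iic)]
  have hpre : ∀ u : ℝ, (Prod.mk u ⁻¹'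
      ((fun p : ℝ × ℝ => -p.1^2 * Real.log p.2 / α) ⁻¹' Iic t))
      = {v : ℝ | -u^2 * Real.log v / α ≤ t} := fun u => rfl
  simp only [hpre]
  rw [setLIntegral_congr (Ioc_ae_eq_Icc (α := ℝ) (μ := volume) (a := 0) (b := 1)).symm]
  by_cases ht : 0 < t
  · rw [if_pos ht]
    exact setLIntegral_congr_fun measurableSet_Ioc
      (fun u hu => slice_pos hα ht hu)
  · rw [if_neg ht]
    rw [setLIntegral_congr_fun measurableSet_Ioc
      (fun u hu => slice_nonpos hα (not_lt.mp ht) hu)]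
    simp

lemma inner_cdf {α t u : ℝ} (hα : 0 < α) (ht : 0 < t) (hu : 0 < u) :
    ∫⁻ s in Ioc (0:ℝ) t, ENNReal.ofReal (α/u^2 * Real.exp (-(α*s)/u^2))
      = ENNReal.ofReal (1 - Real.exp (-(α*t)/u^2)) := by
  have hk0 : 0 < α/u^2 := by positivity
  have h1 : ∀ s : ℝ, α/u^2 * Real.exp (-(α*s)/u^2) = (α/u^2) * Real.exp (-((α/u^2)*s)) := by
    intro s
    congr 2
    ring
  simp_rw [h1]
  have hint : IntegrableOn (fun s => (α/u^2) * Real.exp (-((α/u^2)*s))) (Ioc 0 t) volume :=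
    (by continuity : Continuous fun s => (α/u^2) * Real.exp (-((α/u^2)*s))).integrableOn_Ioc
  rw [← ofReal_integral_eq_lintegral_ofReal hint
    (Filter.Eventually.of_forall fun s => by positivity), exp_cdf_integral hk0 ht]
  congr 2
  ring

lemma gauss_integrable : Integrable (fun y : ℝ => Real.exp (-y^2/2)) := by
  have heq : (fun y : ℝ => Real.exp (-y^2/2)) = fun y => Real.exp (-(1/2:ℝ)*y^2) := by
    funext y; ring_nf
  rw [heq]
  exact integrable_exp_neg_mul_sq one_half_pos

lemma measurable_Phi : Measurable Phi := by
  have hmono : Monotone Phi := by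
    intro a b hab
    unfold Phi
    refine mul_le_mul_of_nonneg_left ?_ (by positivity)
    refine setIntegral_mono_set gauss_integrable.integrableOn
      (Filter.Eventually.of_forall fun y => (Real.exp_pos _).le)
      (Filter.Eventually.of_forall (Iic_subset_Iic.mpr hab))
  exact hmono.measurable

lemma measurable_modExpPdf (α : ℝ) : Measurable (modExpPdf α) := by
  unfold modExpPdf
  refine Measurable.ite measurableSet_Ioi ?_ measurable_const
  refine Measurable.div ?_ (Real.continuous_sqrt.measurable.comp (measurable_id.const_mul α))
  exact measurable_const.mul (measurable_Phi.comp
    ((Real.continuous_sqrt.measurable.comp (measurable_id.const_mul (2*α))).neg))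

lemma withDensity_cdf {α : ℝ} (hα : 0 < α) (t : ℝ) :
    volume.withDensity (fun s => ENNReal.ofReal (modExpPdf α s)) (Iic t)
    = if 0 < t then ∫⁻ u in Ioc (0:ℝ) 1, ENNReal.ofReal (1 - Real.exp (-(α*t)/u^2)) else 0 := by
  rw [withDensity_apply _ measurableSet_Iic]
  have hzero : ∀ {a : ℝ}, a ≤ 0 → ∫⁻ s in Iic a, ENNReal.ofReal (modExpPdf α s) = 0 := by
    intro a ha
    have hz : ∀ s ∈ Iic a, ENNReal.ofReal (modExpPdf α s) = (fun _ => (0:ENNReal)) s :=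
      fun s hs => by simp [modExpPdf, not_lt.mpr (le_trans hs ha)]
    rw [setLIntegral_congr_fun measurableSet_Iic hz]
    simp
  by_cases ht : 0 < t
  swap
  · rw [if_neg ht]; exact hzero (not_lt.mp ht)
  rw [if_pos ht, ← Set.Iic_union_Ioc_eq_Iic ht.le,
    lintegral_union measurableSet_Ioc (Set.Iic_disjoint_Ioc le_rfl), hzero le_rfl, zero_add]
  have step1 : ∫⁻ s in Ioc (0:ℝ) t, ENNReal.ofReal (modExpPdf α s)
      = ∫⁻ s in Ioc (0:ℝ) t, ∫⁻ u in Ioo (0:ℝ) 1,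
          ENNReal.ofReal (α/u^2 * Real.exp (-(α*s)/u^2)) := by
    refine setLIntegral_congr_fun measurableSet_Ioc
      (fun s hs => ?_)
    rw [modExpPdf_eq_integral hα hs.1,
      ofReal_integral_eq_lintegral_ofReal (integrableOn_inner hα hs.1)
        (Filter.Eventually.of_forall fun u => by positivity)]
  have hum : Measurable fun p : ℝ × ℝ =>
      ENNReal.ofReal (α/p.2^2 * Real.exp (-(α*p.1)/p.2^2)) := by
    refine ENNReal.measurable_ofReal.comp ?_
    exact (measurable_const.div (measurable_snd.pow_const 2)).mul
      (Real.measurable_exp.comp (((measurable_fst.const_mul α).neg).div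
        (measurable_snd.pow_const 2)))
  rw [step1, lintegral_lintegral_swap hum.aemeasurable]
  rw [setLIntegral_congr (Ioo_ae_eq_Ioc (α := ℝ) (μ := volume) (a := 0) (b := 1))]
  refine setLIntegral_congr_fun measurableSet_Ioc
    (fun u hu => inner_cdf hα ht hu.1)

/-- if U, V are independent uniform [0,1] random variables then
T = -U² ln(V)/α has density g(t) = α√π Φ(-√(2αt))/√(αt) on (0,∞). -/
theorem modified_exponential_random_numbers
    {Ω : Type*} [MeasureSpace Ω] [IsProbabilityMeasure (ℙ : Measure Ω)]
    (α : ℝ) (hα : 0 < α) (U V : Ω → ℝ)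
    (hU : MeasureTheory.pdf.IsUniform U (Set.Icc (0:ℝ) 1) ℙ volume)
    (hV : MeasureTheory.pdf.IsUniform V (Set.Icc (0:ℝ) 1) ℙ volume)
    (hUV : IndepFun U V ℙ)
    (hUm : Measurable U) (hVm : Measurable V) :
    Measure.map (fun ω => -(U ω) ^ 2 * Real.log (V ω) / α) ℙ
      = volume.withDensity (fun t => ENNReal.ofReal (modExpPdf α t)) := by
  have hvol : ProbabilityTheory.cond (volume : Measure ℝ) (Set.Icc 0 1)
      = volume.restrict (Icc (0:ℝ) 1) := by
    rw [ProbabilityTheory.cond]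
    rw [show (volume : Measure ℝ) (Icc 0 1) = 1 by simp]
    simp
  have hmapU : Measure.map U ℙ = volume.restrict (Icc (0:ℝ) 1) := by
    have h := hU
    unfold MeasureTheory.pdf.IsUniform at h
    rw [h, hvol]
  have hmapV : Measure.map V ℙ = volume.restrict (Icc (0:ℝ) 1) := by
    have h := hV
    unfold MeasureTheory.pdf.IsUniform at h
    rw [h, hvol]
  have hpair := (ProbabilityTheory.indepFun_iff_map_prod_eq_prod_map_map
    hUm.aemeasurable hVm.aemeasurable).mp hUV
  have hT : Measurable fun ω => -(U ω) ^ 2 * Real.log (V ω) / α :=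
    (measurable_g α).comp (hUm.prodMk hVm)
  have key : Measure.map (fun ω => -(U ω) ^ 2 * Real.log (V ω) / α) ℙ
      = Measure.map (fun p : ℝ × ℝ => -p.1^2 * Real.log p.2 / α)
          ((volume.restrict (Icc (0:ℝ) 1)).prod (volume.restrict (Icc (0:ℝ) 1))) := by
    have : (fun ω => -(U ω) ^ 2 * Real.log (V ω) / α)
        = (fun p : ℝ × ℝ => -p.1^2 * Real.log p.2 / α) ∘ fun ω => (U ω, V ω) := rfl
    rw [this, ← Measure.map_map (measurable_g α) (hUm.prodMk hVm), hpair, hmapU, hmapV]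
  haveI : IsProbabilityMeasure
      (Measure.map (fun ω => -(U ω) ^ 2 * Real.log (V ω) / α) ℙ) :=
    Measure.isProbabilityMeasure_map hT.aemeasurable
  refine Measure.ext_of_Iic _ _ (fun t => ?_)
  rw [key, Measure.map_apply (measurable_g α) measurableSet_Iic,
    mapped_cdf hα t, withDensity_cdf hα t]
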